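/- arXiv:2104.07247 — 2 statements merged into one kernel-verified Lean document; each statement's English description precedes it below -/
import Mathlib

section
/- Let N ≥ 1 and let ψ, φ be unit vectors in ℂ^N. Let V be the reflection about ψ, let P_φ be the orthogonal projection onto the span of φ, and set a = |⟪ψ, φ⟫|. Then the self-adjoint operator V P_φ V - P_φ has rank at most 2, and the sum of the absolute values of its eigenvalues (counted with multiplicity) equals 4·a·√(1 - a²). Equivalently, the trace distance between the pure states V φ and φ equals 2·a·√(1 - a²). -/
open scoped InnerProductSpace
open Matrix

lemma aux_rank_vmv {N : ℕ} (w v : Fin N → ℂ) : (Matrix.vecMulVec w v).rank ≤ 1 := by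
  rw [Matrix.vecMulVec_eq (Fin 1)]
  exact le_trans (Matrix.rank_mul_le_left _ _)
    (le_trans (Matrix.rank_le_card_width _) (by simp))

lemma aux_rank_sub {N : ℕ} (X Y : Matrix (Fin N) (Fin N) ℂ) :
    (X - Y).rank ≤ X.rank + Y.rank := by
  classical
  have hr : LinearMap.range (X - Y).mulVecLin ≤
      LinearMap.range X.mulVecLin ⊔ LinearMap.range Y.mulVecLin := by
    rintro z ⟨x, rfl⟩
    have : (X - Y).mulVecLin x = X.mulVecLin x - Y.mulVecLin x := by
      simp [Matrix.mulVecLin_apply, Matrix.sub_mulVec]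
    rw [this]
    exact Submodule.sub_mem_sup (LinearMap.mem_range_self _ _) (LinearMap.mem_range_self _ _)
  have h1 : (X - Y).rank ≤ Module.finrank ℂ
      (LinearMap.range X.mulVecLin ⊔ LinearMap.range Y.mulVecLin : Submodule ℂ (Fin N → ℂ)) :=
    Submodule.finrank_mono hr
  have h2 := Submodule.finrank_sup_add_finrank_inf_eq
    (LinearMap.range X.mulVecLin) (LinearMap.range Y.mulVecLin)
  unfold Matrix.rank at h1 ⊢
  omega

lemma aux_trace_vmv {N : ℕ} (x y : Fin N → ℂ) :
    (Matrix.vecMulVec x y).trace = x ⬝ᵥ y := by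
  simp [Matrix.trace, Matrix.diag, Matrix.vecMulVec_apply, dotProduct]

lemma aux_vmv_mul_vmv {N : ℕ} (a b c d : Fin N → ℂ) :
    Matrix.vecMulVec a b * Matrix.vecMulVec c d = (b ⬝ᵥ c) • Matrix.vecMulVec a d := by
  ext i j
  simp [Matrix.mul_apply, Matrix.vecMulVec_apply, dotProduct, Finset.sum_mul]
  ring_nf
  apply Finset.sum_congr rfl
  intro k _
  ring

lemma aux_herm_vmv {N : ℕ} (x : Fin N → ℂ) : (Matrix.vecMulVec x (star x)).IsHermitian := by
  ext i j
  simp [Matrix.conjTranspose_apply, Matrix.vecMulVec_apply, mul_comm]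

lemma aux_dot_inner {N : ℕ} (x y : EuclideanSpace ℂ (Fin N)) :
    star (x : Fin N → ℂ) ⬝ᵥ (y : Fin N → ℂ) = ⟪x, y⟫_ℂ := by
  simp [dotProduct, PiLp.inner_apply, RCLike.inner_apply, mul_comm]

lemma aux_mulvec {N : ℕ} (ψ φ : EuclideanSpace ℂ (Fin N)) (V : Matrix (Fin N) (Fin N) ℂ)
    (hV : V = 1 - (2 : ℂ) • Matrix.vecMulVec ψ (star ψ)) :
    V *ᵥ (φ : Fin N → ℂ) = ((φ - (2 * ⟪ψ, φ⟫_ℂ) • ψ : EuclideanSpace ℂ (Fin N)) : Fin N → ℂ) := by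
  funext i
  have h : ⟪ψ, φ⟫_ℂ = star (ψ : Fin N → ℂ) ⬝ᵥ (φ : Fin N → ℂ) := (aux_dot_inner ψ φ).symm
  rw [hV, Matrix.sub_mulVec, Matrix.smul_mulVec]
  simp only [Matrix.mulVec, dotProduct, Matrix.smul_apply,
    Matrix.vecMulVec_apply, h, PiLp.sub_apply, PiLp.smul_apply, smul_eq_mul, Pi.sub_apply,
    Pi.smul_apply, Pi.star_apply, Finset.mul_sum, Finset.sum_mul]
  congr 1
  · simp [Matrix.one_apply]
  · apply Finset.sum_congr rfl
    intro k _
    ring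

lemma aux_inners {N : ℕ} (ψ φ : EuclideanSpace ℂ (Fin N)) (hψ : ‖ψ‖ = 1) (hφ : ‖φ‖ = 1)
    (a : ℝ) (ha : a = ‖⟪ψ, φ⟫_ℂ‖) :
    ⟪φ - (2 * ⟪ψ, φ⟫_ℂ) • ψ, φ - (2 * ⟪ψ, φ⟫_ℂ) • ψ⟫_ℂ = 1 ∧
    ⟪φ - (2 * ⟪ψ, φ⟫_ℂ) • ψ, φ⟫_ℂ = ((1 - 2*a^2 : ℝ) : ℂ) ∧
    ⟪φ, φ - (2 * ⟪ψ, φ⟫_ℂ) • ψ⟫_ℂ = ((1 - 2*a^2 : ℝ) : ℂ) := by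
  set c := ⟪ψ, φ⟫_ℂ with hc
  have hψψ : ⟪ψ, ψ⟫_ℂ = 1 := by
    rw [inner_self_eq_norm_sq_to_K, hψ]; norm_num
  have hφφ : ⟪φ, φ⟫_ℂ = 1 := by
    rw [inner_self_eq_norm_sq_to_K, hφ]; norm_num
  have hφψ : ⟪φ, ψ⟫_ℂ = (starRingEnd ℂ) c := by rw [hc, ← inner_conj_symm]
  have hcc : (starRingEnd ℂ) c * c = ((a^2 : ℝ) : ℂ) := by
    rw [ha, Complex.conj_mul']; norm_cast
  have hcc' : c * (starRingEnd ℂ) c = ((a^2 : ℝ) : ℂ) := by rw [mul_comm]; exact hcc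
  push_cast at hcc hcc'
  refine ⟨?_, ?_, ?_⟩ <;>
    simp only [inner_sub_left, inner_sub_right, inner_smul_left, inner_smul_right,
      hψψ, hφφ, hφψ, ← hc, _root_.map_mul, map_ofNat, mul_one] <;>
    push_cast <;>
    [linear_combination (0:ℂ) * hcc'; linear_combination (-2:ℂ) * hcc'; linear_combination (-2:ℂ) * hcc']

lemma aux_trace_eig {N : ℕ} (M : Matrix (Fin N) (Fin N) ℂ) (hM : M.IsHermitian) :
    (∑ i, ((hM.eigenvalues i : ℂ))) = M.trace ∧
    (∑ i, ((hM.eigenvalues i : ℂ))^2) = (M * M).trace := by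
  classical
  set U : Matrix (Fin N) (Fin N) ℂ := (hM.eigenvectorUnitary : Matrix (Fin N) (Fin N) ℂ) with hU
  have hUU : star U * U = 1 := Matrix.mem_unitaryGroup_iff'.mp hM.eigenvectorUnitary.2
  set D : Matrix (Fin N) (Fin N) ℂ :=
    Matrix.diagonal (RCLike.ofReal ∘ hM.eigenvalues) with hD
  have hspec : M = U * D * star U := hM.spectral_theorem
  have h1 : M.trace = (U * D * star U).trace := by rw [← hspec]
  constructor
  · rw [h1, Matrix.trace_mul_cycle, hUU, Matrix.one_mul, hD, Matrix.trace_diagonal]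
    simp
  · have : M * M = U * (D * D) * star U := by
      rw [hspec]
      calc U * D * star U * (U * D * star U) = U * (D * ((star U * U) * D)) * star U := by
            simp only [Matrix.mul_assoc]
        _ = U * (D * D) * star U := by rw [hUU, Matrix.one_mul]
    have h2 : (M * M).trace = (U * (D * D) * star U).trace := by rw [← this]
    rw [h2, Matrix.trace_mul_cycle, hUU, Matrix.one_mul, hD,
      Matrix.diagonal_mul_diagonal, Matrix.trace_diagonal]
    simp [sq]

lemma aux_comb {N : ℕ} (f : Fin N → ℝ) (hcard : Fintype.card {i // f i ≠ 0} ≤ 2)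
    (hsum : ∑ i, f i = 0) : (∑ i, |f i|)^2 = 2 * ∑ i, (f i)^2 := by
  classical
  set S : Finset (Fin N) := Finset.univ.filter (fun i => f i ≠ 0) with hS
  have hmem : ∀ i, i ∈ S ↔ f i ≠ 0 := by
    intro i; simp [hS]
  have hcS : S.card ≤ 2 := by
    rw [Fintype.card_subtype] at hcard
    exact hcard
  have hrestr : ∀ g : Fin N → ℝ, (∀ i, f i = 0 → g i = 0) → ∑ i, g i = ∑ i ∈ S, g i := by
    intro g hg
    refine (Finset.sum_subset (Finset.subset_univ S) ?_).symm
    intro i _ hi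
    exact hg i (by by_contra h; exact hi ((hmem i).mpr h))
  have e1 : ∑ i, |f i| = ∑ i ∈ S, |f i| := hrestr _ (by intro i h; simp [h])
  have e2 : ∑ i, (f i)^2 = ∑ i ∈ S, (f i)^2 := hrestr _ (by intro i h; simp [h])
  have e0 : ∑ i ∈ S, f i = 0 := by rw [← hrestr f (fun i h => h)]; exact hsum
  rw [e1, e2]
  interval_cases h : S.card
  · rw [Finset.card_eq_zero] at h
    simp [h]
  · obtain ⟨x, hx⟩ := Finset.card_eq_one.mp h
    exfalso
    have hfx : f x ≠ 0 := (hmem x).mp (by simp [hx])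
    apply hfx
    simpa [hx] using e0
  · obtain ⟨x, y, hxy, hxyS⟩ := Finset.card_eq_two.mp h
    have hsum2 : f x + f y = 0 := by simpa [hxyS, Finset.sum_pair hxy] using e0
    have hy : f y = -f x := by linarith
    rw [hxyS, Finset.sum_pair hxy, Finset.sum_pair hxy, hy]
    simp only [abs_neg, neg_sq]
    rw [← sq_abs (f x)]
    ring

lemma aux_final {N : ℕ} (M : Matrix (Fin N) (Fin N) ℂ) (hM : M.IsHermitian) (a : ℝ)
    (ha0 : 0 ≤ a) (ha1 : a ≤ 1) (hrank : M.rank ≤ 2) (htr : M.trace = 0)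
    (htr2 : (M * M).trace = ((8*a^2*(1-a^2) : ℝ) : ℂ)) :
    ∑ i, |hM.eigenvalues i| = 4 * a * Real.sqrt (1 - a^2) := by
  obtain ⟨ht1, ht2⟩ := aux_trace_eig M hM
  have hs0 : ∑ i, hM.eigenvalues i = 0 := by
    have : ((∑ i, hM.eigenvalues i : ℝ) : ℂ) = 0 := by push_cast; rw [ht1, htr]
    exact_mod_cast this
  have hs2 : ∑ i, (hM.eigenvalues i)^2 = 8*a^2*(1-a^2) := by
    have : ((∑ i, (hM.eigenvalues i)^2 : ℝ) : ℂ) = ((8*a^2*(1-a^2) : ℝ) : ℂ) := by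
      push_cast; rw [ht2, htr2]; push_cast; ring
    exact_mod_cast this
  have hcard : Fintype.card {i // hM.eigenvalues i ≠ 0} ≤ 2 := by
    rw [← hM.rank_eq_card_non_zero_eigs]; exact hrank
  have hsq : (∑ i, |hM.eigenvalues i|)^2 = 16*a^2*(1-a^2) := by
    rw [aux_comb _ hcard hs0, hs2]; ring
  have h1a : (0:ℝ) ≤ 1 - a^2 := by nlinarith
  have hrhs : (4 * a * Real.sqrt (1 - a^2))^2 = 16*a^2*(1-a^2) := by
    rw [mul_pow, mul_pow, Real.sq_sqrt h1a]; ring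
  calc ∑ i, |hM.eigenvalues i| = Real.sqrt ((∑ i, |hM.eigenvalues i|)^2) :=
        (Real.sqrt_sq (by positivity)).symm
    _ = Real.sqrt ((4 * a * Real.sqrt (1 - a^2))^2) := by rw [hsq, hrhs]
    _ = 4 * a * Real.sqrt (1 - a^2) := Real.sqrt_sq (by positivity)

/-- for the reflection `V` about a unit vector `ψ` and a unit vector `φ`,
with `a = |⟪ψ,φ⟫|`, the self-adjoint operator `V P_φ V - P_φ` has rank at most `2` and the
absolute values of its eigenvalues sum to `4·a·√(1-a²)`; equivalently the trace distance
between the pure states `Vφ` and `φ` equals `2·a·√(1-a²)`. -/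
theorem stmt_1 (N : ℕ) (hN : 1 ≤ N)
    (ψ φ : EuclideanSpace ℂ (Fin N)) (hψ : ‖ψ‖ = 1) (hφ : ‖φ‖ = 1)
    (V Pφ A B : Matrix (Fin N) (Fin N) ℂ)
    (hV : V = 1 - (2 : ℂ) • Matrix.vecMulVec ψ (star ψ))
    (hPφ : Pφ = Matrix.vecMulVec φ (star φ))
    (hA : A = V * Pφ * V - Pφ)
    (hB : B = Matrix.vecMulVec (V *ᵥ φ) (star (V *ᵥ φ)) - Matrix.vecMulVec φ (star φ))
    (a : ℝ) (ha : a = ‖⟪ψ, φ⟫_ℂ‖) :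
    A.rank ≤ 2 ∧
    ∃ hAh : A.IsHermitian, (∑ i, |hAh.eigenvalues i|) = 4 * a * Real.sqrt (1 - a ^ 2) ∧
    ∃ hBh : B.IsHermitian,
      (1 / 2) * (∑ i, |hBh.eigenvalues i|) = 2 * a * Real.sqrt (1 - a ^ 2) := by
  classical
  -- V is Hermitian
  have hVH : Vᴴ = V := by
    rw [hV]
    rw [Matrix.conjTranspose_sub, Matrix.conjTranspose_smul, Matrix.conjTranspose_one]
    congr 1
    · congr 1
      · norm_num
      · exact aux_herm_vmv ψ
  set u : Fin N → ℂ := V *ᵥ (φ : Fin N → ℂ) with hud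
  -- A = B
  have hAB : A = B := by
    rw [hA, hB, hPφ]
    congr 1
    rw [Matrix.vecMulVec_eq (Fin 1) (V *ᵥ φ), Matrix.vecMulVec_eq (Fin 1) (φ : Fin N → ℂ)]
    rw [Matrix.star_mulVec, hVH, ← Matrix.mul_assoc, ← Matrix.replicateCol_mulVec,
      Matrix.replicateRow_vecMul, Matrix.mul_assoc]
  -- dot product facts
  obtain ⟨hi1, hi2, hi3⟩ := aux_inners ψ φ hψ hφ a ha
  have hu : u = ((φ - (2 * ⟪ψ, φ⟫_ℂ) • ψ : EuclideanSpace ℂ (Fin N)) : Fin N → ℂ) :=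
    aux_mulvec ψ φ V hV
  have duu : star u ⬝ᵥ u = 1 := by rw [hu, aux_dot_inner, hi1]
  have dff : star (φ : Fin N → ℂ) ⬝ᵥ (φ : Fin N → ℂ) = 1 := by
    rw [aux_dot_inner]
    rw [inner_self_eq_norm_sq_to_K, hφ]; norm_num
  have duf : star u ⬝ᵥ (φ : Fin N → ℂ) = ((1 - 2*a^2 : ℝ) : ℂ) := by
    rw [hu, aux_dot_inner, hi2]
  have dfu : star (φ : Fin N → ℂ) ⬝ᵥ u = ((1 - 2*a^2 : ℝ) : ℂ) := by
    rw [hu, aux_dot_inner, hi3]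
  -- B as difference of projections
  set P : Matrix (Fin N) (Fin N) ℂ := Matrix.vecMulVec u (star u) with hP
  set Q : Matrix (Fin N) (Fin N) ℂ := Matrix.vecMulVec (φ : Fin N → ℂ) (star (φ : Fin N → ℂ))
    with hQ
  have hBPQ : B = P - Q := by rw [hB]
  -- rank
  have hrank : A.rank ≤ 2 := by
    rw [hAB, hBPQ]
    calc (P - Q).rank ≤ P.rank + Q.rank := aux_rank_sub P Q
      _ ≤ 1 + 1 := add_le_add (aux_rank_vmv _ _) (aux_rank_vmv _ _)
      _ = 2 := rfl
  -- hermitian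
  have hBh : B.IsHermitian := by
    rw [hBPQ, hP, hQ]
    exact (aux_herm_vmv u).sub (aux_herm_vmv _)
  have hAh : A.IsHermitian := by rw [hAB]; exact hBh
  -- traces
  have htr : B.trace = 0 := by
    rw [hBPQ, Matrix.trace_sub, hP, hQ, aux_trace_vmv, aux_trace_vmv,
      dotProduct_comm, duu, dotProduct_comm, dff, sub_self]
  have htr2 : (B * B).trace = ((8*a^2*(1-a^2) : ℝ) : ℂ) := by
    have expand : B * B = P * P - P * Q - Q * P + Q * Q := by
      rw [hBPQ]; noncomm_ring
    rw [expand, Matrix.trace_add, Matrix.trace_sub, Matrix.trace_sub]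
    rw [hP, hQ, aux_vmv_mul_vmv, aux_vmv_mul_vmv, aux_vmv_mul_vmv, aux_vmv_mul_vmv]
    rw [Matrix.trace_smul, Matrix.trace_smul, Matrix.trace_smul, Matrix.trace_smul]
    rw [aux_trace_vmv, aux_trace_vmv, aux_trace_vmv, aux_trace_vmv]
    rw [duu, duf, dfu, dff]
    rw [dotProduct_comm u (star u), duu, dotProduct_comm u (star φ), dfu,
      dotProduct_comm (φ : Fin N → ℂ) (star u), duf,
      dotProduct_comm (φ : Fin N → ℂ) (star φ), dff]
    simp only [smul_eq_mul]
    push_cast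
    ring
  -- bounds on a
  have ha0 : 0 ≤ a := by rw [ha]; exact norm_nonneg _
  have ha1 : a ≤ 1 := by
    rw [ha]
    calc ‖⟪ψ, φ⟫_ℂ‖ ≤ ‖ψ‖ * ‖φ‖ := norm_inner_le_norm ψ φ
      _ = 1 := by rw [hψ, hφ]; ring
  have hAtr : A.trace = 0 := by rw [hAB]; exact htr
  have hAtr2 : (A * A).trace = ((8*a^2*(1-a^2) : ℝ) : ℂ) := by rw [hAB]; exact htr2
  have hBrank : B.rank ≤ 2 := by rw [← hAB]; exact hrank
  have hsumA := aux_final A hAh a ha0 ha1 hrank hAtr hAtr2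
  have hsumB := aux_final B hBh a ha0 ha1 hBrank htr htr2
  refine ⟨hrank, hAh, ?_, hBh, ?_⟩
  · rw [hsumA]
  · rw [hsumB]; ring
end

section
/- Let n and p be natural numbers and let A : ({0,1}^n → Bool) → ({0,1}^p) be any function (assigning a p-bit advice string to each assignment of membership, i.e. to each Boolean-valued language restricted to strings of length n). Then there exists an advice string z ∈ {0,1}^p such that the set D = { x ∈ {0,1}^n : there exist f, g ∈ A⁻¹(z) with f(x) ≠ g(x) } of inputs not determined by z satisfies |D| ≥ 2^n - p. -/
/-- for any assignment `A` of a `p`-bit advice string to each Boolean language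
on `n`-bit inputs, some advice string `z` fails to determine membership of at least
`2^n - p` inputs. -/
theorem stmt_11 (n p : ℕ) (A : ((Fin n → Bool) → Bool) → (Fin p → Bool)) :
    ∃ z : Fin p → Bool,
      (2 ^ n : ℤ) - p ≤
        ({x : Fin n → Bool | ∃ f, ∃ g, A f = z ∧ A g = z ∧ f x ≠ g x} : Set (Fin n → Bool)).ncard := by
  classical
  by_cases hp : (2 : ℕ) ^ n ≤ p
  · refine ⟨fun _ => false, ?_⟩
    have h1 : ((2 : ℤ) ^ n) - p ≤ 0 := by
      have : ((2 : ℕ) ^ n : ℤ) ≤ (p : ℤ) := by exact_mod_cast hp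
      push_cast at this ⊢
      linarith
    exact h1.trans (by positivity)
  · push_neg at hp
    have hple : p ≤ 2 ^ n := hp.le
    have hcard : Fintype.card (Fin p → Bool) * 2 ^ (2 ^ n - p)
        ≤ Fintype.card ((Fin n → Bool) → Bool) := by
      simp only [Fintype.card_fun, Fintype.card_fin, Fintype.card_bool]
      rw [← pow_add, Nat.add_sub_cancel' hple]
    obtain ⟨z, hz⟩ := Fintype.exists_le_card_fiber_of_mul_le_card A hcard
    refine ⟨z, ?_⟩
    set D : Set (Fin n → Bool) :=
      {x : Fin n → Bool | ∃ f, ∃ g, A f = z ∧ A g = z ∧ f x ≠ g x} with hD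
    have hDfin : D.Finite := Set.toFinite D
    set S : Finset ((Fin n → Bool) → Bool) := Finset.univ.filter (fun f => A f = z) with hS
    -- injection from S into (D → Bool)
    have hinj : Function.Injective
        (fun (f : {f // f ∈ S}) (x : hDfin.toFinset) => f.1 x.1) := by
      rintro ⟨f, hf⟩ ⟨g, hg⟩ h
      have hfz : A f = z := by simpa [hS] using hf
      have hgz : A g = z := by simpa [hS] using hg
      ext1
      funext x
      by_cases hx : x ∈ D
      · have : (fun (x : hDfin.toFinset) => f x.1) = fun x => g x.1 := h
        exact congrFun this ⟨x, hDfin.mem_toFinset.2 hx⟩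
      · by_contra hne
        exact hx ⟨f, g, hfz, hgz, hne⟩
    have hle : S.card ≤ 2 ^ hDfin.toFinset.card := by
      have h := Fintype.card_le_of_injective _ hinj
      rwa [Fintype.card_fun, Fintype.card_bool, Fintype.card_coe, Fintype.card_coe] at h
    have hlow : 2 ^ (2 ^ n - p) ≤ S.card := hz
    have hpow : 2 ^ (2 ^ n - p) ≤ 2 ^ hDfin.toFinset.card := hlow.trans hle
    have hexp : 2 ^ n - p ≤ hDfin.toFinset.card :=
      (Nat.pow_le_pow_iff_right one_lt_two).1 hpow
    have hncard : D.ncard = hDfin.toFinset.card := Set.ncard_eq_toFinset_card D hDfin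
    have : ((2 : ℕ) ^ n - p : ℕ) ≤ D.ncard := by omega
    have h2 : ((2 : ℤ) ^ n) - p = ((2 ^ n - p : ℕ) : ℤ) := by
      push_cast [hple]
      ring
    rw [h2]
    exact_mod_cast this
end
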